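/- Let N be a positive integer, R ≤ N, let κ' and κ'' be diagonal real matrices of sizes R×R and (N−R)×(N−R) with strictly positive entries, and set κ = diag(κ',κ''). Let Q₀ be a real (N−R)×R matrix and X₀ a symmetric real R×R matrix; define C = [[I,0],[Q₀,0]], D = [[X₀,−Q₀ᵀ],[0,I]], σ(r) = κ^{−1/2}(e^{κr}C + e^{−κr}D), Q(r) = e^{κ''r}Q₀e^{−κ'r}, X(r) = e^{−κ'r}X₀e^{−κ'r} and Y(r) = I + X(r) + Q(r)ᵀQ(r). Fix r and assume Y(r) is invertible. Then σ(r) is invertible and the superpotential satisfies U(r) = σ'(r)σ(r)⁻¹ = −κ + 2 κ^{1/2} [[Y⁻¹, Y⁻¹Qᵀ],[QY⁻¹, QY⁻¹Qᵀ]] κ^{1/2}, where Y, Q are evaluated at r and the block matrix is partitioned with an R×R upper-left block. -/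

import Mathlib

open Matrix

set_option maxHeartbeats 1000000 in
/-- Paper's Proposition 1, equation (51): for the canonical factorization solution
`σ(r) = κ^{-1/2}(e^{κr}C + e^{-κr}D)`, if `Y(r) = I + X(r) + Q(r)ᵀQ(r)` is invertible
at a point `r`, then `σ(r)` is invertible there and the superpotential equals
`U(r) = -κ + 2κ^{1/2}[[Y⁻¹, Y⁻¹Qᵀ],[QY⁻¹, QY⁻¹Qᵀ]]κ^{1/2}`. -/
theorem prop1_superpotential_formula
    (N R : ℕ) (hN : 0 < N) (hR : R ≤ N)
    (κ' : Fin R → ℝ) (κ'' : Fin (N - R) → ℝ)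
    (hκ' : ∀ i, 0 < κ' i) (hκ'' : ∀ j, 0 < κ'' j)
    (Q₀ : Matrix (Fin (N - R)) (Fin R) ℝ)
    (X₀ : Matrix (Fin R) (Fin R) ℝ) (hX₀ : X₀.IsSymm)
    (r : ℝ) :
    let κv : Fin R ⊕ Fin (N - R) → ℝ := Sum.elim κ' κ''
    let C : Matrix (Fin R ⊕ Fin (N - R)) (Fin R ⊕ Fin (N - R)) ℝ :=
      fromBlocks 1 0 Q₀ 0
    let D : Matrix (Fin R ⊕ Fin (N - R)) (Fin R ⊕ Fin (N - R)) ℝ :=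
      fromBlocks X₀ (-Q₀ᵀ) 0 1
    let σ : ℝ → Matrix (Fin R ⊕ Fin (N - R)) (Fin R ⊕ Fin (N - R)) ℝ := fun s =>
      diagonal (fun i => (Real.sqrt (κv i))⁻¹) *
        (diagonal (fun i => Real.exp (κv i * s)) * C +
          diagonal (fun i => Real.exp (-(κv i) * s)) * D)
    let σd : ℝ → Matrix (Fin R ⊕ Fin (N - R)) (Fin R ⊕ Fin (N - R)) ℝ := fun s =>
      Matrix.of fun i j => deriv (fun t => σ t i j) s
    let Q : Matrix (Fin (N - R)) (Fin R) ℝ :=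
      diagonal (fun j => Real.exp (κ'' j * r)) * Q₀ *
        diagonal (fun i => Real.exp (-(κ' i) * r))
    let X : Matrix (Fin R) (Fin R) ℝ :=
      diagonal (fun i => Real.exp (-(κ' i) * r)) * X₀ *
        diagonal (fun i => Real.exp (-(κ' i) * r))
    let Y : Matrix (Fin R) (Fin R) ℝ := 1 + X + Qᵀ * Q
    IsUnit Y →
    IsUnit (σ r) ∧
      σd r * (σ r)⁻¹ =
        -(diagonal κv) +
          (2 : ℝ) • (diagonal (fun i => Real.sqrt (κv i)) *
            fromBlocks Y⁻¹ (Y⁻¹ * Qᵀ) (Q * Y⁻¹) (Q * Y⁻¹ * Qᵀ) *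
            diagonal (fun i => Real.sqrt (κv i))) := by
  intro κv C D σ σd Q X Y hY
  have hκv : ∀ i, 0 < κv i := by rintro (i | j); exacts [hκ' i, hκ'' j]
  set Kh : Matrix (Fin R ⊕ Fin (N - R)) (Fin R ⊕ Fin (N - R)) ℝ :=
    diagonal (fun i => Real.sqrt (κv i)) with hKh
  set Kmh : Matrix (Fin R ⊕ Fin (N - R)) (Fin R ⊕ Fin (N - R)) ℝ :=
    diagonal (fun i => (Real.sqrt (κv i))⁻¹) with hKmh
  set G : Matrix (Fin R ⊕ Fin (N - R)) (Fin R ⊕ Fin (N - R)) ℝ :=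
    diagonal (Sum.elim (fun i => Real.exp (κ' i * r)) (fun j => Real.exp (-(κ'' j) * r)))
    with hG
  set G' : Matrix (Fin R ⊕ Fin (N - R)) (Fin R ⊕ Fin (N - R)) ℝ :=
    diagonal (Sum.elim (fun i => Real.exp (-(κ' i) * r)) (fun j => Real.exp (κ'' j * r)))
    with hG'
  set M : Matrix (Fin R ⊕ Fin (N - R)) (Fin R ⊕ Fin (N - R)) ℝ :=
    fromBlocks (1 + X) (-Qᵀ) Q 1 with hM
  set M' : Matrix (Fin R ⊕ Fin (N - R)) (Fin R ⊕ Fin (N - R)) ℝ :=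
    fromBlocks (1 - X) Qᵀ Q (-1) with hM'
  set Minv : Matrix (Fin R ⊕ Fin (N - R)) (Fin R ⊕ Fin (N - R)) ℝ :=
    fromBlocks Y⁻¹ (Y⁻¹ * Qᵀ) (-(Q * Y⁻¹)) (1 - Q * Y⁻¹ * Qᵀ) with hMinv
  set T : Matrix (Fin R ⊕ Fin (N - R)) (Fin R ⊕ Fin (N - R)) ℝ :=
    fromBlocks 1 0 Q 0 with hT
  set F : Matrix (Fin R ⊕ Fin (N - R)) (Fin R ⊕ Fin (N - R)) ℝ :=
    fromBlocks Y⁻¹ (Y⁻¹ * Qᵀ) (Q * Y⁻¹) (Q * Y⁻¹ * Qᵀ) with hF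
  have hsnz : ∀ i, Real.sqrt (κv i) ≠ 0 := fun i => ne_of_gt (Real.sqrt_pos.mpr (hκv i))
  have hdiag1 : ∀ f : Fin R ⊕ Fin (N - R) → ℝ, (∀ i, f i = 1) →
      diagonal f = (1 : Matrix (Fin R ⊕ Fin (N - R)) (Fin R ⊕ Fin (N - R)) ℝ) := by
    intro f hf
    rw [show f = fun _ => 1 from funext hf, diagonal_one]
  have hGG' : G * G' = 1 := by
    rw [hG, hG', diagonal_mul_diagonal]
    apply hdiag1
    rintro (i | j) <;> simp [← Real.exp_add]
  have hKK : Kmh * Kh = 1 := by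
    rw [hKmh, hKh, diagonal_mul_diagonal]
    exact hdiag1 _ fun i => inv_mul_cancel₀ (hsnz i)
  have hKsq : Kh * Kh = diagonal κv := by
    rw [hKh, diagonal_mul_diagonal]
    exact congrArg _ (funext fun i => Real.mul_self_sqrt (hκv i).le)
  have hfacP :
      diagonal (fun i => Real.exp (κv i * r)) * C +
        diagonal (fun i => Real.exp (-(κv i) * r)) * D = M * G := by
    ext i j
    rcases i with i | i <;> rcases j with j | j <;>
      simp [hM, hG, κv, C, D, Q, X, Matrix.add_apply, Matrix.diagonal_mul,
        Matrix.mul_diagonal, Matrix.one_apply, Real.exp_neg, neg_mul]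
    all_goals try (split_ifs with h)
    all_goals try subst h
    all_goals try field_simp
    all_goals try ring
  have hfacM :
      diagonal (fun i => Real.exp (κv i * r)) * C -
        diagonal (fun i => Real.exp (-(κv i) * r)) * D = M' * G := by
    ext i j
    rcases i with i | i <;> rcases j with j | j <;>
      simp [hM', hG, κv, C, D, Q, X, Matrix.sub_apply, Matrix.diagonal_mul,
        Matrix.mul_diagonal, Matrix.one_apply, Real.exp_neg, neg_mul]
    all_goals try (split_ifs with h)
    all_goals try subst h
    all_goals try field_simp
    all_goals try ring
  have hσ : σ r = Kmh * (M * G) := by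
    show Kmh * _ = _
    rw [hfacP]
  have hσd : σd r = Kh * (M' * G) := by
    rw [← hfacM]
    ext i j
    have hfun : (fun t => σ t i j) = fun t =>
        (Real.sqrt (κv i))⁻¹ *
          (Real.exp (κv i * t) * C i j + Real.exp (-(κv i) * t) * D i j) := by
      funext t
      simp [σ, Matrix.diagonal_mul, Matrix.add_apply]
    have hder : HasDerivAt (fun t => σ t i j)
        ((Real.sqrt (κv i))⁻¹ *
          (Real.exp (κv i * r) * (κv i * 1) * C i j +
            Real.exp (-(κv i) * r) * (-(κv i) * 1) * D i j)) r := by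
      rw [hfun]
      exact ((((hasDerivAt_id r).const_mul (κv i)).exp.mul_const (C i j)).add
        (((hasDerivAt_id r).const_mul (-(κv i))).exp.mul_const (D i j))).const_mul _
    have heq : σd r i j = _ := hder.deriv
    rw [heq, hKh]
    simp only [Matrix.diagonal_mul, Matrix.sub_apply]
    have hk : (Real.sqrt (κv i))⁻¹ * κv i = Real.sqrt (κv i) := by
      rw [inv_mul_eq_div, div_eq_iff (hsnz i)]
      exact (Real.mul_self_sqrt (hκv i).le).symm
    have hid : (Real.sqrt (κv i))⁻¹ *
        (Real.exp (κv i * r) * (κv i * 1) * C i j +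
          Real.exp (-(κv i) * r) * (-(κv i) * 1) * D i j) =
        ((Real.sqrt (κv i))⁻¹ * κv i) *
          (Real.exp (κv i * r) * C i j - Real.exp (-(κv i) * r) * D i j) := by ring
    rw [hid, hk]
  have hYdet : IsUnit Y.det := (Matrix.isUnit_iff_isUnit_det Y).mp hY
  have hY1 : Y * Y⁻¹ = 1 := Matrix.mul_nonsing_inv Y hYdet
  have hYdef : Y = 1 + X + Qᵀ * Q := rfl
  have hMMinv : M * Minv = 1 := by
    have e11 : (1 + X) * Y⁻¹ + (-Qᵀ) * (-(Q * Y⁻¹)) = 1 := by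
      have h : (1 + X) * Y⁻¹ + (-Qᵀ) * (-(Q * Y⁻¹)) = (1 + X + Qᵀ * Q) * Y⁻¹ := by
        simp only [Matrix.add_mul, Matrix.neg_mul, Matrix.mul_neg, Matrix.one_mul,
          Matrix.mul_assoc, neg_neg]
      rw [h, ← hYdef, hY1]
    have e12 : (1 + X) * (Y⁻¹ * Qᵀ) + (-Qᵀ) * (1 - Q * Y⁻¹ * Qᵀ) = 0 := by
      have h : (1 + X) * (Y⁻¹ * Qᵀ) + (-Qᵀ) * (1 - Q * Y⁻¹ * Qᵀ) =
          (1 + X + Qᵀ * Q) * (Y⁻¹ * Qᵀ) - Qᵀ := by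
        simp only [Matrix.add_mul, Matrix.mul_sub, Matrix.neg_mul, Matrix.mul_one,
          Matrix.one_mul, Matrix.mul_assoc, neg_sub]
        abel
      rw [h, ← hYdef, ← Matrix.mul_assoc, hY1, Matrix.one_mul, sub_self]
    have e21 : Q * Y⁻¹ +
        (1 : Matrix (Fin (N - R)) (Fin (N - R)) ℝ) * (-(Q * Y⁻¹)) = 0 := by simp
    have e22 : Q * (Y⁻¹ * Qᵀ) +
        (1 : Matrix (Fin (N - R)) (Fin (N - R)) ℝ) * (1 - Q * Y⁻¹ * Qᵀ) = 1 := by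
      simp only [Matrix.one_mul, Matrix.mul_assoc]
      abel
    rw [hM, hMinv, fromBlocks_multiply, e11, e12, e21, e22, fromBlocks_one]
  have hTMinv : T * Minv = F := by
    have t11 : (1 : Matrix (Fin R) (Fin R) ℝ) * Y⁻¹ +
        (0 : Matrix (Fin R) (Fin (N - R)) ℝ) * (-(Q * Y⁻¹)) = Y⁻¹ := by simp
    have t12 : (1 : Matrix (Fin R) (Fin R) ℝ) * (Y⁻¹ * Qᵀ) +
        (0 : Matrix (Fin R) (Fin (N - R)) ℝ) * (1 - Q * Y⁻¹ * Qᵀ) = Y⁻¹ * Qᵀ := by simp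
    have t21 : Q * Y⁻¹ +
        (0 : Matrix (Fin (N - R)) (Fin (N - R)) ℝ) * (-(Q * Y⁻¹)) = Q * Y⁻¹ := by simp
    have t22 : Q * (Y⁻¹ * Qᵀ) +
        (0 : Matrix (Fin (N - R)) (Fin (N - R)) ℝ) * (1 - Q * Y⁻¹ * Qᵀ) =
        Q * Y⁻¹ * Qᵀ := by simp [Matrix.mul_assoc]
    rw [hT, hMinv, hF, fromBlocks_multiply, t11, t12, t21, t22]
  have hM'2 : M' = (2 : ℝ) • T - M := by
    ext i j
    rcases i with i | i <;> rcases j with j | j <;>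
      simp [hM', hT, hM, Matrix.sub_apply, Matrix.one_apply, smul_eq_mul] <;>
      first
        | (split_ifs <;> ring)
        | ring
  have hM'Minv : M' * Minv = (2 : ℝ) • F - 1 := by
    rw [hM'2, Matrix.sub_mul, Matrix.smul_mul, hTMinv, hMMinv]
  have hσinv_mul : σ r * (G' * (Minv * Kh)) = 1 := by
    rw [hσ]
    simp only [Matrix.mul_assoc]
    rw [← Matrix.mul_assoc G G', hGG', Matrix.one_mul,
      ← Matrix.mul_assoc M Minv, hMMinv, Matrix.one_mul, hKK]
  refine ⟨(Matrix.isUnit_iff_isUnit_det _).mpr (Matrix.isUnit_det_of_right_inverse hσinv_mul), ?_⟩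
  have hσinv : (σ r)⁻¹ = G' * (Minv * Kh) := Matrix.inv_eq_right_inv hσinv_mul
  rw [hσd, hσinv]
  simp only [Matrix.mul_assoc]
  rw [← Matrix.mul_assoc G G', hGG', Matrix.one_mul,
    ← Matrix.mul_assoc M' Minv, hM'Minv, Matrix.sub_mul, Matrix.smul_mul,
    Matrix.one_mul, Matrix.mul_sub, Matrix.mul_smul, hKsq, sub_eq_neg_add]
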